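/- With V(θ) = −Σ_i θ⋆(i)·ln(θ(i)/θ⋆(i)) and mean field h(θ) = (θ⋆ − θ)/Σ_i(θ⋆(i)/θ(i)), the inner product ⟨∇V(θ), h(θ)⟩ is ≤ 0 for all θ in the open simplex Θ, with equality if and only if θ = θ⋆. -/

import Mathlib

/-- with `∇V(θ)_i = -θ⋆ i / θ i` and
`h(θ) = (θ⋆ - θ) / ∑ j, θ⋆ j / θ j`, one has `⟨∇V(θ), h(θ)⟩ ≤ 0`, with equality iff
`θ = θ⋆`. -/
theorem stmt_9 {d : ℕ} (θstar θ : Fin d → ℝ)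
    (hθstarpos : ∀ i, 0 < θstar i) (hθstarsum : ∑ i, θstar i = 1)
    (hθpos : ∀ i, 0 < θ i) (hθsum : ∑ i, θ i = 1) :
    (∑ i, (-(θstar i) / θ i) * ((θstar i - θ i) / ∑ j, θstar j / θ j)) ≤ 0 ∧
    ((∑ i, (-(θstar i) / θ i) * ((θstar i - θ i) / ∑ j, θstar j / θ j)) = 0 ↔
      θ = θstar) := by
  have hne : Nonempty (Fin d) := by
    rcases Nat.eq_zero_or_pos d with h | h
    · subst h; simp at hθsum
    · exact ⟨⟨0, h⟩⟩
  set S := ∑ j, θstar j / θ j with hSdef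
  have hS : 0 < S :=
    Finset.sum_pos (fun i _ => div_pos (hθstarpos i) (hθpos i)) Finset.univ_nonempty
  set T := ∑ i, (θstar i - θ i) ^ 2 / θ i with hTdef
  have hTnn : 0 ≤ T :=
    Finset.sum_nonneg fun i _ => div_nonneg (sq_nonneg _) (hθpos i).le
  have key : (∑ i, (-(θstar i) / θ i) * ((θstar i - θ i) / S)) = -T / S := by
    have h1 : ∀ i : Fin d, (-(θstar i) / θ i) * ((θstar i - θ i) / S)
        = (-((θstar i - θ i) ^ 2 / θ i) - (θstar i - θ i)) / S := by
      intro i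
      have h0 : θ i ≠ 0 := (hθpos i).ne'
      field_simp
      ring
    rw [Finset.sum_congr rfl fun i _ => h1 i, ← Finset.sum_div]
    congr 1
    rw [Finset.sum_sub_distrib, Finset.sum_sub_distrib, hθstarsum, hθsum]
    simp [hTdef, Finset.sum_neg_distrib]
  constructor
  · rw [key]
    exact div_nonpos_of_nonpos_of_nonneg (neg_nonpos.2 hTnn) hS.le
  · rw [key]
    constructor
    · intro h
      have hT0 : T = 0 := by
        have := (div_eq_zero_iff.1 h)
        rcases this with h' | h'
        · linarith [neg_eq_zero.1 h']
        · exact absurd h' hS.ne'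
      have := (Finset.sum_eq_zero_iff_of_nonneg
        (fun i _ => div_nonneg (sq_nonneg (θstar i - θ i)) (hθpos i).le)).1 hT0
      funext i
      have hi := this i (Finset.mem_univ i)
      have h0 : θ i ≠ 0 := (hθpos i).ne'
      field_simp at hi
      rw [mul_zero, pow_eq_zero_iff two_ne_zero] at hi
      linarith
    · intro h
      subst h
      simp [hTdef]
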